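/- The iterated-integral series solves the parallel transport equation: let A be a unital Banach algebra over ℝ and f : ℝ → A continuous; define T : [0,∞) → A by T(x) = Σ_{k≥0} ∫_{0 ≤ t₁ ≤ ⋯ ≤ t_k ≤ x} f(t_k)·f(t_{k−1})⋯f(t₁) dt (the k = 0 term being 1, the k-th term a Bochner integral over the simplex {t ∈ ℝᵏ : 0 ≤ t₁ ≤ ⋯ ≤ t_k ≤ x}). Then the series converges absolutely for every x ≥ 0, T(0) = 1, and T is differentiable with T'(x) = f(x)·T(x) for all x ≥ 0. (This identifies the series Θ(γ) = Id + ∫ω + ∫ωω + ∫ωωω + ⋯ from parallel transport with the solution of the transport differential equation, where f is the pullback of a connection 1-form along a path γ.) -/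

import Mathlib

open MeasureTheory Topology

variable {A : Type*} [NormedRing A] [NormedAlgebra ℝ A] [CompleteSpace A]

/-- The simplex `{t : ℝᵏ | a ≤ t 0 ≤ t 1 ≤ ⋯ ≤ t (k-1) ≤ b}`. -/
def simplexSet (k : ℕ) (a b : ℝ) : Set (Fin k → ℝ) :=
  {t | Monotone t ∧ ∀ i, t i ∈ Set.Icc a b}

/-- The iterated integral `I(f₁, …, f_k; a, b)` of a list of functions `fs = [f₁, …, f_k]`,
as a Bochner integral of the (noncommutative, ordered) product `f₁ (t₁) ⋯ f_k (t_k)` over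
the simplex `a ≤ t₁ ≤ ⋯ ≤ t_k ≤ b` with respect to Lebesgue measure.  For `k = 0` this
is the integral of the empty product `1` over the one-point space `Fin 0 → ℝ` of total
measure `1`, i.e. it equals `1`. -/
noncomputable def iterInt (fs : List (ℝ → A)) (a b : ℝ) : A :=
  ∫ t in simplexSet fs.length a b, (List.ofFn fun i => fs.get i (t i)).prod

/-- The `k`-th term of the parallel transport series: the Bochner integral of the
reversed ordered product `f (t_k) ⋯ f (t₁)` over the simplex `0 ≤ t₁ ≤ ⋯ ≤ t_k ≤ x`. -/
noncomputable def transportTerm (f : ℝ → A) (k : ℕ) (x : ℝ) : A :=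
  ∫ t in simplexSet k 0 x, ((List.ofFn fun i => f (t i)).reverse).prod

/-- The parallel transport `T x = ∑_{k ≥ 0} ∫_{0 ≤ t₁ ≤ ⋯ ≤ t_k ≤ x} f t_k ⋯ f t₁ dt`. -/
noncomputable def transport (f : ℝ → A) (x : ℝ) : A :=
  ∑' k : ℕ, transportTerm f k x

lemma isClosed_simplexSet (k : ℕ) (a b : ℝ) : IsClosed (simplexSet k a b) := by
  have h1 : IsClosed {t : Fin k → ℝ | Monotone t} := by
    have he : {t : Fin k → ℝ | Monotone t}
        = ⋂ (i : Fin k) (j : Fin k) (_ : i ≤ j), {t : Fin k → ℝ | t i ≤ t j} := by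
      ext t; simp [Monotone]
    rw [he]
    exact isClosed_iInter fun i => isClosed_iInter fun j => isClosed_iInter fun _ =>
      isClosed_le (continuous_apply i) (continuous_apply j)
  have h2 : IsClosed {t : Fin k → ℝ | ∀ i, t i ∈ Set.Icc a b} := by
    have he : {t : Fin k → ℝ | ∀ i, t i ∈ Set.Icc a b}
        = ⋂ i, (fun t : Fin k → ℝ => t i) ⁻¹' Set.Icc a b := by ext t; simp
    rw [he]
    exact isClosed_iInter fun i => isClosed_Icc.preimage (continuous_apply i)
  exact h1.inter h2

lemma isCompact_simplexSet (k : ℕ) (a b : ℝ) : IsCompact (simplexSet k a b) := by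
  refine IsCompact.of_isClosed_subset (isCompact_univ_pi fun _ : Fin k => isCompact_Icc (a := a) (b := b))
    (isClosed_simplexSet k a b) ?_
  intro t ht i _
  exact ht.2 i

lemma measurableSet_simplexSet (k : ℕ) (a b : ℝ) : MeasurableSet (simplexSet k a b) :=
  (isClosed_simplexSet k a b).measurableSet

lemma continuous_revProd {k : ℕ} (f : ℝ → A) (hf : Continuous f) :
    Continuous fun t : Fin k → ℝ => ((List.ofFn fun i => f (t i)).reverse).prod := by
  have h : ∀ t : Fin k → ℝ, ((List.ofFn fun i => f (t i)).reverse).prod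
      = (((List.finRange k).reverse).map fun i => f (t i)).prod := by
    intro t; rw [List.ofFn_eq_map, List.map_reverse]
  simp_rw [h]
  exact continuous_list_prod _ fun i _ => hf.comp (continuous_apply i)

lemma transportTerm_zero (f : ℝ → A) (x : ℝ) : transportTerm f 0 x = 1 := by
  have hs : simplexSet 0 0 x = Set.univ := by
    ext t
    simp only [simplexSet, Set.mem_setOf_eq, Set.mem_univ, iff_true]
    exact ⟨fun i j _ => le_of_eq (congrArg t (Subsingleton.elim i j)), fun i => i.elim0⟩
  rw [transportTerm, hs]
  simp only [List.ofFn_zero, List.reverse_nil, List.prod_nil]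
  rw [setIntegral_const]
  have : (volume (Set.univ : Set (Fin 0 → ℝ))) = 1 := by
    rw [MeasureTheory.volume_pi, Measure.pi_univ]; simp
  rw [measureReal_def, this]
  simp

lemma preim_eq (k : ℕ) (x : ℝ) :
    (MeasurableEquiv.piFinSuccAbove (fun _ : Fin (k+1) => ℝ) (Fin.last k)).symm ⁻¹'
      (simplexSet (k+1) 0 x)
    = {p : ℝ × (Fin k → ℝ) | p.1 ∈ Set.Icc 0 x ∧ p.2 ∈ simplexSet k 0 p.1} := by
  ext ⟨s, u⟩
  have hsymm : (MeasurableEquiv.piFinSuccAbove (fun _ : Fin (k+1) => ℝ) (Fin.last k)).symm (s, u)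
      = Fin.snoc u s := by
    simp [MeasurableEquiv.piFinSuccAbove, Fin.insertNthEquiv]
  simp only [Set.mem_preimage, hsymm, simplexSet, Set.mem_setOf_eq]
  constructor
  · rintro ⟨hmono, hmem⟩
    have hs : s ∈ Set.Icc 0 x := by simpa using hmem (Fin.last k)
    refine ⟨hs, ?_, ?_⟩
    · intro i j hij
      have := hmono (Fin.castSucc_le_castSucc_iff.2 hij)
      simpa using this
    · intro i
      have h1 : (0:ℝ) ≤ u i := by simpa using (hmem i.castSucc).1
      have h2 : u i ≤ s := by
        have := hmono (Fin.le_last i.castSucc)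
        simpa using this
      exact ⟨h1, h2⟩
  · rintro ⟨⟨hs0, hsx⟩, hu, hmem⟩
    constructor
    · intro i j hij
      induction j using Fin.lastCases with
      | last =>
        simp only [Fin.snoc_last]
        induction i using Fin.lastCases with
        | last => simp
        | cast i' => simpa using (hmem i').2
      | cast j' =>
        induction i using Fin.lastCases with
        | last => exact absurd (le_antisymm (Fin.le_last _) hij) (by
            simp [Fin.ext_iff]
            omega)
        | cast i' =>
          have : i' ≤ j' := by
            rwa [Fin.castSucc_le_castSucc_iff] at hij
          simpa using hu this
    · intro i
      induction i using Fin.lastCases with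
      | last => simpa using ⟨hs0, hsx⟩
      | cast i' =>
        simp only [Fin.snoc_castSucc]
        exact ⟨(hmem i').1, le_trans (hmem i').2 hsx⟩

lemma integrableOn_revProd (f : ℝ → A) (hf : Continuous f) (k : ℕ) (a b : ℝ) :
    IntegrableOn (fun t : Fin k → ℝ => ((List.ofFn fun i => f (t i)).reverse).prod)
      (simplexSet k a b) volume :=
  ((continuous_revProd f hf).continuousOn).integrableOn_compact (isCompact_simplexSet k a b)

lemma mul_transportTerm (f : ℝ → A) (hf : Continuous f) (k : ℕ) (s : ℝ) (c : A) :
    (∫ u in simplexSet k 0 s, c * ((List.ofFn fun i => f (u i)).reverse).prod)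
      = c * transportTerm f k s := by
  rw [transportTerm]
  exact (ContinuousLinearMap.mul ℝ A c).integral_comp_comm (integrableOn_revProd f hf k 0 s)

lemma transportTerm_succ (f : ℝ → A) (hf : Continuous f) (k : ℕ) {x : ℝ} (hx : 0 ≤ x) :
    transportTerm f (k+1) x = ∫ s in (0:ℝ)..x, f s * transportTerm f k s := by
  classical
  set e := MeasurableEquiv.piFinSuccAbove (fun _ : Fin (k+1) => ℝ) (Fin.last k) with he
  set F : (Fin (k+1) → ℝ) → A := fun t => ((List.ofFn fun i => f (t i)).reverse).prod with hF
  set T : Set (ℝ × (Fin k → ℝ)) :=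
    {p : ℝ × (Fin k → ℝ) | p.1 ∈ Set.Icc 0 x ∧ p.2 ∈ simplexSet k 0 p.1} with hT
  have hPres : MeasurePreserving e.symm volume volume :=
    (volume_preserving_piFinSuccAbove (fun _ : Fin (k+1) => ℝ) (Fin.last k)).symm
  have step1 : transportTerm f (k+1) x = ∫ p in T, F (e.symm p) := by
    rw [transportTerm]
    rw [← hPres.setIntegral_preimage_emb e.symm.measurableEmbedding F (simplexSet (k+1) 0 x)]
    rw [he, preim_eq k x]
  have hsymm : ∀ p : ℝ × (Fin k → ℝ), e.symm p = Fin.snoc p.2 p.1 := by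
    rintro ⟨s, u⟩
    simp [he, MeasurableEquiv.piFinSuccAbove, Fin.insertNthEquiv]
  have hFG : ∀ p : ℝ × (Fin k → ℝ),
      F (e.symm p) = f p.1 * ((List.ofFn fun i => f (p.2 i)).reverse).prod := by
    rintro ⟨s, u⟩
    rw [hsymm, hF]
    simp only
    rw [List.ofFn_succ']
    simp [Fin.snoc_castSucc, Fin.snoc_last]
  set G : ℝ × (Fin k → ℝ) → A := fun p => f p.1 * ((List.ofFn fun i => f (p.2 i)).reverse).prod
    with hG
  -- compactness / measurability of T
  have hTsub : T ⊆ Set.Icc 0 x ×ˢ (Set.pi Set.univ fun _ : Fin k => Set.Icc 0 x) := by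
    rintro ⟨s, u⟩ ⟨hs, hu⟩
    exact ⟨hs, fun i _ => ⟨(hu.2 i).1, le_trans (hu.2 i).2 hs.2⟩⟩
  have hTclosed : IsClosed T := by
    have h1 : IsClosed {p : ℝ × (Fin k → ℝ) | p.1 ∈ Set.Icc 0 x} :=
      (isClosed_Icc).preimage continuous_fst
    have h2 : IsClosed {p : ℝ × (Fin k → ℝ) | Monotone p.2} := by
      have he2 : {p : ℝ × (Fin k → ℝ) | Monotone p.2}
          = ⋂ (i : Fin k) (j : Fin k) (_ : i ≤ j), {p : ℝ × (Fin k → ℝ) | p.2 i ≤ p.2 j} := by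
        ext p; simp [Monotone]
      rw [he2]
      exact isClosed_iInter fun i => isClosed_iInter fun j => isClosed_iInter fun _ =>
        isClosed_le ((continuous_apply i).comp continuous_snd)
          ((continuous_apply j).comp continuous_snd)
    have h3 : IsClosed {p : ℝ × (Fin k → ℝ) | ∀ i, p.2 i ∈ Set.Icc 0 p.1} := by
      have he3 : {p : ℝ × (Fin k → ℝ) | ∀ i, p.2 i ∈ Set.Icc 0 p.1}
          = ⋂ (i : Fin k), ({p : ℝ × (Fin k → ℝ) | 0 ≤ p.2 i} ∩ {p | p.2 i ≤ p.1}) := by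
        ext p; simp [Set.mem_Icc, forall_and]
      rw [he3]
      refine isClosed_iInter fun i => IsClosed.inter ?_ ?_
      · exact isClosed_le continuous_const ((continuous_apply i).comp continuous_snd)
      · exact isClosed_le ((continuous_apply i).comp continuous_snd) continuous_fst
    have : T = {p : ℝ × (Fin k → ℝ) | p.1 ∈ Set.Icc 0 x} ∩
        ({p | Monotone p.2} ∩ {p | ∀ i, p.2 i ∈ Set.Icc 0 p.1}) := by
      ext p; simp [hT, simplexSet, and_assoc]
    rw [this]
    exact h1.inter (h2.inter h3)
  have hTcompact : IsCompact T :=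
    IsCompact.of_isClosed_subset (isCompact_Icc.prod (isCompact_univ_pi fun _ => isCompact_Icc))
      hTclosed hTsub
  have hTmeas : MeasurableSet T := hTclosed.measurableSet
  have step2 : transportTerm f (k+1) x = ∫ p in T, G p := by
    rw [step1]; exact setIntegral_congr_fun hTmeas (fun p _ => hFG p)
  have hGcont : Continuous G :=
    (hf.comp continuous_fst).mul ((continuous_revProd f hf).comp continuous_snd)
  have hGint : IntegrableOn G T volume := hGcont.continuousOn.integrableOn_compact hTcompact
  -- Fubini
  have step3 : (∫ p in T, G p)
      = ∫ s : ℝ, ∫ u : Fin k → ℝ, T.indicator G (s, u) := by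
    rw [← integral_indicator hTmeas]
    have hint : Integrable (T.indicator G) ((volume : Measure ℝ).prod volume) := by
      rw [← Measure.volume_eq_prod]; exact (integrable_indicator_iff hTmeas).2 hGint
    rw [Measure.volume_eq_prod, integral_prod _ hint]
  have inner : ∀ s : ℝ, (∫ u : Fin k → ℝ, T.indicator G (s, u))
      = Set.indicator (Set.Icc 0 x) (fun s' => f s' * transportTerm f k s') s := by
    intro s
    by_cases hs : s ∈ Set.Icc 0 x
    · rw [Set.indicator_of_mem hs]
      have hind : ∀ u : Fin k → ℝ, T.indicator G (s, u)
          = (simplexSet k 0 s).indicator (fun u => G (s, u)) u := by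
        intro u
        by_cases hu : u ∈ simplexSet k 0 s
        · rw [Set.indicator_of_mem (by exact ⟨hs, hu⟩), Set.indicator_of_mem hu]
        · rw [Set.indicator_of_notMem (fun h => hu h.2), Set.indicator_of_notMem hu]
      simp_rw [hind]
      rw [integral_indicator (measurableSet_simplexSet k 0 s)]
      exact mul_transportTerm f hf k s (f s)
    · rw [Set.indicator_of_notMem hs]
      have : ∀ u : Fin k → ℝ, T.indicator G (s, u) = 0 := fun u =>
        Set.indicator_of_notMem (fun h => hs h.1) _
      simp_rw [this, integral_zero]
  have step4 : (∫ s : ℝ, ∫ u : Fin k → ℝ, T.indicator G (s, u))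
      = ∫ s in (0:ℝ)..x, f s * transportTerm f k s := by
    simp_rw [inner]
    rw [integral_indicator measurableSet_Icc, integral_Icc_eq_integral_Ioc,
      ← intervalIntegral.integral_of_le hx]
  rw [step2, step3, step4]

lemma primitive_hasDerivWithinAt {h : ℝ → A} (hc : ContinuousOn h (Set.Ici 0)) {x : ℝ}
    (hx : 0 ≤ x) :
    HasDerivWithinAt (fun y => ∫ s in (0:ℝ)..y, h s) (h x) (Set.Ici 0) x := by
  have hxx : x ∈ Set.Icc (0:ℝ) (x+1) := ⟨hx, by linarith⟩
  haveI : Fact (x ∈ Set.Icc (0:ℝ) (x+1)) := ⟨hxx⟩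
  have hsub : Set.Icc (0:ℝ) (x+1) ⊆ Set.Ici 0 := fun y hy => hy.1
  have hInt : IntervalIntegrable h volume 0 x := by
    apply ContinuousOn.intervalIntegrable
    apply hc.mono
    rw [Set.uIcc_of_le hx]
    exact fun y hy => hy.1
  have hmeas : StronglyMeasurableAtFilter h (𝓝[Set.Icc (0:ℝ) (x+1)] x) :=
    ⟨Set.Icc 0 (x+1), self_mem_nhdsWithin,
      ((hc.mono hsub).aestronglyMeasurable measurableSet_Icc)⟩
  have hd : HasDerivWithinAt (fun y => ∫ s in (0:ℝ)..y, h s) (h x) (Set.Icc 0 (x+1)) x :=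
    intervalIntegral.integral_hasDerivWithinAt_right hInt hmeas ((hc.mono hsub) x hxx)
  have hset : Set.Icc (0:ℝ) (x+1) =ᶠ[nhds x] Set.Ici 0 := by
    rw [Filter.eventuallyEq_set]
    filter_upwards [Iio_mem_nhds (show x < x + 1 by linarith)] with y hy
    simp only [Set.mem_Icc, Set.mem_Ici]
    exact ⟨fun h => h.1, fun h => ⟨h, le_of_lt hy⟩⟩
  exact (hasDerivWithinAt_congr_set hset).1 hd

lemma continuousOn_transportTerm (f : ℝ → A) (hf : Continuous f) (k : ℕ) :
    ContinuousOn (transportTerm f k) (Set.Ici 0) := by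
  induction k with
  | zero =>
    have : transportTerm f 0 = fun _ : ℝ => (1:A) := funext (transportTerm_zero f)
    rw [this]; exact continuousOn_const
  | succ k ih =>
    have hcont : ContinuousOn (fun s => f s * transportTerm f k s) (Set.Ici 0) :=
      (hf.continuousOn).mul ih
    intro x hx
    refine ((primitive_hasDerivWithinAt hcont hx).continuousWithinAt).congr ?_ ?_
    · exact fun y hy => transportTerm_succ f hf k hy
    · exact transportTerm_succ f hf k hx

lemma norm_transportTerm_le (f : ℝ → A) (hf : Continuous f) {b M : ℝ} (hM0 : 0 ≤ M)
    (hM : ∀ s ∈ Set.Icc (0:ℝ) b, ‖f s‖ ≤ M) (k : ℕ) :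
    ∀ y ∈ Set.Icc (0:ℝ) b, ‖transportTerm f k y‖ ≤ ‖(1:A)‖ * (M ^ k * y ^ k / (k.factorial : ℝ)) := by
  induction k with
  | zero =>
    intro y hy
    simp [transportTerm_zero]
  | succ k ih =>
    intro y hy
    rw [transportTerm_succ f hf k hy.1]
    have hIcc : Set.Icc (0:ℝ) y ⊆ Set.Icc 0 b := Set.Icc_subset_Icc le_rfl hy.2
    have hb1 : ∀ᵐ s ∂(volume.restrict (Set.uIoc (0:ℝ) y)), ‖f s * transportTerm f k s‖ ≤
        M * (‖(1:A)‖ * (M ^ k * s ^ k / (k.factorial : ℝ))) := by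
      rw [Set.uIoc_of_le hy.1]
      refine (ae_restrict_iff' measurableSet_Ioc).2 (Filter.Eventually.of_forall ?_)
      intro s hs
      have hs' : s ∈ Set.Icc (0:ℝ) b := ⟨le_of_lt hs.1, le_trans hs.2 hy.2⟩
      calc ‖f s * transportTerm f k s‖ ≤ ‖f s‖ * ‖transportTerm f k s‖ := norm_mul_le _ _
        _ ≤ M * (‖(1:A)‖ * (M ^ k * s ^ k / (k.factorial : ℝ))) := by
            apply mul_le_mul (hM s hs') (ih s ⟨le_of_lt hs.1, le_trans hs.2 hy.2⟩)
              (norm_nonneg _) hM0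
    have hbi : IntervalIntegrable
        (fun s => M * (‖(1:A)‖ * (M ^ k * s ^ k / (k.factorial : ℝ)))) volume 0 y := by
      apply Continuous.intervalIntegrable
      continuity
    have h1 := (intervalIntegral.norm_integral_le_of_norm_le hy.1
      ((ae_restrict_iff' measurableSet_Ioc).1 (by rwa [Set.uIoc_of_le hy.1] at hb1)) hbi).trans
      (le_abs_self _)
    have h2 : (∫ s in (0:ℝ)..y, M * (‖(1:A)‖ * (M ^ k * s ^ k / (k.factorial : ℝ))))
        = ‖(1:A)‖ * (M ^ (k+1) * y ^ (k+1) / ((k+1).factorial : ℝ)) := by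
      rw [intervalIntegral.integral_const_mul]
      rw [intervalIntegral.integral_const_mul]
      have : (fun s : ℝ => M ^ k * s ^ k / (k.factorial : ℝ))
          = fun s : ℝ => (M ^ k / (k.factorial : ℝ)) * s ^ k := by
        funext s; ring
      rw [this, intervalIntegral.integral_const_mul, integral_pow]
      have hkf : ((k.factorial : ℝ)) ≠ 0 := Nat.cast_ne_zero.2 (Nat.factorial_ne_zero k)
      have hkf1 : (((k+1).factorial : ℝ)) ≠ 0 := Nat.cast_ne_zero.2 (Nat.factorial_ne_zero (k+1))
      rw [Nat.factorial_succ]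
      push_cast
      field_simp
      ring
    rw [h2] at h1
    calc ‖∫ s in (0:ℝ)..y, f s * transportTerm f k s‖
        ≤ |‖(1:A)‖ * (M ^ (k+1) * y ^ (k+1) / ((k+1).factorial : ℝ))| := h1
      _ = ‖(1:A)‖ * (M ^ (k+1) * y ^ (k+1) / ((k+1).factorial : ℝ)) := by
          rw [abs_of_nonneg]
          exact mul_nonneg (norm_nonneg _) (div_nonneg
            (mul_nonneg (pow_nonneg hM0 _) (pow_nonneg hy.1 _)) (Nat.cast_nonneg _))

lemma exists_bound (f : ℝ → A) (hf : Continuous f) (b : ℝ) :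
    ∃ M : ℝ, 0 ≤ M ∧ ∀ s ∈ Set.Icc (0:ℝ) b, ‖f s‖ ≤ M := by
  obtain ⟨C, hC⟩ := (isCompact_Icc (a := (0:ℝ)) (b := b)).exists_bound_of_continuousOn
    hf.continuousOn
  exact ⟨max C 0, le_max_right _ _, fun s hs => le_trans (hC s hs) (le_max_left _ _)⟩

lemma summable_bound (c M : ℝ) :
    Summable fun k : ℕ => c * (M ^ k / (k.factorial : ℝ)) :=
  (Real.summable_pow_div_factorial M).mul_left c

lemma summable_norm_transportTerm (f : ℝ → A) (hf : Continuous f) {x : ℝ} (hx : 0 ≤ x) :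
    Summable fun k : ℕ => ‖transportTerm f k x‖ := by
  obtain ⟨M, hM0, hM⟩ := exists_bound f hf x
  have hsum : Summable fun k : ℕ => ‖(1:A)‖ * (M ^ k * x ^ k / (k.factorial : ℝ)) :=
    (summable_bound ‖(1:A)‖ (M * x)).congr (fun k => by rw [mul_pow])
  refine Summable.of_nonneg_of_le (fun k => norm_nonneg _) (fun k => ?_) hsum
  exact norm_transportTerm_le f hf hM0 hM k x ⟨hx, le_rfl⟩

lemma continuousOn_transport (f : ℝ → A) (hf : Continuous f) :
    ContinuousOn (transport f) (Set.Ici 0) := by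
  intro x hx
  have hx' : (0:ℝ) ≤ x := hx
  obtain ⟨M, hM0, hM⟩ := exists_bound f hf (x + 1)
  have hcont : ContinuousOn (transport f) (Set.Icc 0 (x+1)) := by
    refine continuousOn_tsum (fun k => (continuousOn_transportTerm f hf k).mono
      (fun y hy => hy.1)) ((summable_bound ‖(1:A)‖ (M * (x+1))).congr (fun k => by rw [mul_pow]))
      (fun k y hy => ?_)
    calc ‖transportTerm f k y‖ ≤ ‖(1:A)‖ * (M ^ k * y ^ k / (k.factorial : ℝ)) :=
          norm_transportTerm_le f hf hM0 hM k y hy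
      _ ≤ ‖(1:A)‖ * (M ^ k * (x+1) ^ k / (k.factorial : ℝ)) := by
          gcongr
          exacts [hy.1, hy.2]
  have hset : Set.Icc (0:ℝ) (x+1) =ᶠ[𝓝 x] Set.Ici 0 := by
    rw [Filter.eventuallyEq_set]
    filter_upwards [Iio_mem_nhds (show x < x + 1 by linarith)] with y hy
    simp only [Set.mem_Icc, Set.mem_Ici]
    exact ⟨fun h => h.1, fun h => ⟨h, le_of_lt hy⟩⟩
  have := hcont x ⟨hx', by linarith⟩
  rwa [ContinuousWithinAt, nhdsWithin_eq_iff_eventuallyEq.2 hset] at this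

lemma transport_eq (f : ℝ → A) (hf : Continuous f) {x : ℝ} (hx : 0 ≤ x) :
    transport f x = 1 + ∫ s in (0:ℝ)..x, f s * transport f s := by
  obtain ⟨M, hM0, hM⟩ := exists_bound f hf x
  have hsum : Summable fun k : ℕ => transportTerm f k x :=
    (summable_norm_transportTerm f hf hx).of_norm
  have h0 : transport f x = transportTerm f 0 x + ∑' k : ℕ, transportTerm f (k+1) x := by
    rw [transport]; exact hsum.tsum_eq_zero_add
  have hHasSum : HasSum (fun k : ℕ => ∫ s in (0:ℝ)..x, f s * transportTerm f k s)
      (∫ s in (0:ℝ)..x, f s * transport f s) := by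
    apply intervalIntegral.hasSum_integral_of_dominated_convergence
      (bound := fun k _ => M * (‖(1:A)‖ * (M ^ k * x ^ k / (k.factorial : ℝ))))
    · intro k
      rw [Set.uIoc_of_le hx]
      exact ((hf.continuousOn.mul ((continuousOn_transportTerm f hf k).mono
        (fun y (hy : y ∈ Set.Ioc (0:ℝ) x) => le_of_lt hy.1))).aestronglyMeasurable
        measurableSet_Ioc)
    · intro k
      refine Filter.Eventually.of_forall (fun t ht => ?_)
      rw [Set.uIoc_of_le hx] at ht
      have ht' : t ∈ Set.Icc (0:ℝ) x := ⟨le_of_lt ht.1, ht.2⟩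
      calc ‖f t * transportTerm f k t‖ ≤ ‖f t‖ * ‖transportTerm f k t‖ := norm_mul_le _ _
        _ ≤ M * (‖(1:A)‖ * (M ^ k * t ^ k / (k.factorial : ℝ))) :=
            mul_le_mul (hM t ht') (norm_transportTerm_le f hf hM0 hM k t ht')
              (norm_nonneg _) hM0
        _ ≤ M * (‖(1:A)‖ * (M ^ k * x ^ k / (k.factorial : ℝ))) := by
            gcongr
            exacts [ht'.1, ht'.2]
    · exact Filter.Eventually.of_forall (fun t _ => by
        have := (summable_bound (M * ‖(1:A)‖) (M * x)).congr
          (fun k : ℕ => show M * ‖(1:A)‖ * ((M*x) ^ k / (k.factorial : ℝ))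
            = M * (‖(1:A)‖ * (M ^ k * x ^ k / (k.factorial : ℝ))) by rw [mul_pow]; ring)
        exact this)
    · apply Continuous.intervalIntegrable; continuity
    · refine Filter.Eventually.of_forall (fun t ht => ?_)
      rw [Set.uIoc_of_le hx] at ht
      have : HasSum (fun k : ℕ => transportTerm f k t) (transport f t) :=
        ((summable_norm_transportTerm f hf (le_of_lt ht.1)).of_norm).hasSum
      exact this.mul_left (f t)
  have h1 : (∑' k : ℕ, transportTerm f (k+1) x) = ∫ s in (0:ℝ)..x, f s * transport f s := by
    rw [← hHasSum.tsum_eq]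
    congr 1
    funext k
    exact transportTerm_succ f hf k hx
  rw [h0, transportTerm_zero, h1]


/-- The iterated-integral series solves the parallel transport equation: for a continuous
`f : ℝ → A`, the series converges absolutely for every `x ≥ 0`, `T 0 = 1`, and
`T' x = f x * T x` for all `x ≥ 0` (derivative within `[0, ∞)`). -/
theorem transport_solves_transport_equation (f : ℝ → A) (hf : Continuous f) :
    (∀ x : ℝ, 0 ≤ x → Summable fun k : ℕ => ‖transportTerm f k x‖) ∧
    transport f 0 = 1 ∧
    (∀ x : ℝ, 0 ≤ x →
      HasDerivWithinAt (transport f) (f x * transport f x) (Set.Ici 0) x) := by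
  refine ⟨fun x hx => summable_norm_transportTerm f hf hx, ?_, ?_⟩
  · rw [transport_eq f hf le_rfl]
    simp
  · intro x hx
    have hcont : ContinuousOn (fun s => f s * transport f s) (Set.Ici 0) :=
      hf.continuousOn.mul (continuousOn_transport f hf)
    have hG : HasDerivWithinAt (fun y => 1 + ∫ s in (0:ℝ)..y, f s * transport f s)
        (f x * transport f x) (Set.Ici 0) x :=
      (primitive_hasDerivWithinAt hcont hx).const_add 1
    exact hG.congr (fun y hy => transport_eq f hf hy) (transport_eq f hf hx)
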